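/- Conservativeness of the Neymanian variance estimator: in a completely randomized 2^K factorial experiment with all N_z ≥ 2, let V̂_ℓ = 2^{−2(K−1)} Σ_{z ∈ {0,1}^K} s_z²/N_z, where s_z² = (1/(N_z−1)) Σ_{i : T(i)=z} (Y_i(z) − p_z)². Then for every nonempty subset ℓ ⊆ {1,…,K}, E[V̂_ℓ] − Var(τ̂_ℓ) = S²_{τ_ℓ}/N ≥ 0, with equality to zero if and only if the unit-level effects τ_{i,ℓ} are equal for all units i. -/

import Mathlib

open Finset

/-- The finset of completely randomized assignments of `N` units to treatments in `J`
with group sizes `Nj`. -/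
def assignments (N : ℕ) {J : Type*} [Fintype J] [DecidableEq J] (Nj : J → ℕ) :
    Finset (Fin N → J) :=
  Finset.univ.filter fun T => ∀ j, (Finset.univ.filter fun i => T i = j).card = Nj j

/-- Expectation with respect to the uniform distribution on completely randomized
assignments. -/
noncomputable def expect {N : ℕ} {J : Type*} [Fintype J] [DecidableEq J]
    (Nj : J → ℕ) (f : (Fin N → J) → ℝ) : ℝ :=
  (∑ T ∈ assignments N Nj, f T) / ((assignments N Nj).card : ℝ)

/-- Variance with respect to the randomization distribution. -/
noncomputable def rvar {N : ℕ} {J : Type*} [Fintype J] [DecidableEq J]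
    (Nj : J → ℕ) (f : (Fin N → J) → ℝ) : ℝ :=
  expect Nj fun T => (f T - expect Nj f) ^ 2

/-- Covariance with respect to the randomization distribution. -/
noncomputable def rcov {N : ℕ} {J : Type*} [Fintype J] [DecidableEq J]
    (Nj : J → ℕ) (f g : (Fin N → J) → ℝ) : ℝ :=
  expect Nj fun T => (f T - expect Nj f) * (g T - expect Nj g)

/-- Observed group mean `p_j` of treatment `j` under assignment `T`. -/
noncomputable def pObs {N : ℕ} {J : Type*} [DecidableEq J]
    (Y : Fin N → J → ℝ) (Nj : J → ℕ) (j : J) (T : Fin N → J) : ℝ :=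
  (∑ i ∈ Finset.univ.filter fun i => T i = j, Y i j) / (Nj j : ℝ)

/-- Population mean `P_j`. -/
noncomputable def Pmean {N : ℕ} {J : Type*} (Y : Fin N → J → ℝ) (j : J) : ℝ :=
  (∑ i, Y i j) / (N : ℝ)

/-- Population variance `S_j²`. -/
noncomputable def S2 {N : ℕ} {J : Type*} (Y : Fin N → J → ℝ) (j : J) : ℝ :=
  (∑ i, (Y i j - Pmean Y j) ^ 2) / ((N : ℝ) - 1)

/-- Variance of unit-level differences `S²_{j-j'}`. -/
noncomputable def S2diff {N : ℕ} {J : Type*} (Y : Fin N → J → ℝ) (j j' : J) : ℝ :=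
  (∑ i, (Y i j - Y i j' - (Pmean Y j - Pmean Y j')) ^ 2) / ((N : ℝ) - 1)

/-- Contrast coefficient `λ_{ℓ,z} = Π_{k∈ℓ} (2 z_k - 1)` for a subset `ℓ` of factors and a
treatment `z ∈ {0,1}^K`. -/
def lam {K : ℕ} (ℓ : Finset (Fin K)) (z : Fin K → Bool) : ℝ :=
  ∏ k ∈ ℓ, (if z k then 1 else -1)

/-- Finite-population factorial effect `τ_ℓ = 2^{-(K-1)} Σ_z λ_{ℓ,z} P_z`. -/
noncomputable def tauFP {N K : ℕ} (Y : Fin N → (Fin K → Bool) → ℝ) (ℓ : Finset (Fin K)) : ℝ :=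
  (1 / 2 ^ (K - 1)) * ∑ z, lam ℓ z * Pmean Y z

/-- Unit-level factorial effect `τ_{i,ℓ} = 2^{-(K-1)} Σ_z λ_{ℓ,z} Y_i(z)`. -/
noncomputable def tauUnit {N K : ℕ} (Y : Fin N → (Fin K → Bool) → ℝ) (i : Fin N)
    (ℓ : Finset (Fin K)) : ℝ :=
  (1 / 2 ^ (K - 1)) * ∑ z, lam ℓ z * Y i z

/-- Plug-in factorial effect estimator `τ̂_ℓ = 2^{-(K-1)} Σ_z λ_{ℓ,z} p_z`. -/
noncomputable def tauHat {N K : ℕ} (Y : Fin N → (Fin K → Bool) → ℝ)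
    (Nj : (Fin K → Bool) → ℕ) (ℓ : Finset (Fin K)) (T : Fin N → (Fin K → Bool)) : ℝ :=
  (1 / 2 ^ (K - 1)) * ∑ z, lam ℓ z * pObs Y Nj z T

/-- Variance of unit-level factorial effects `S²_{τ_ℓ}`. -/
noncomputable def S2tau {N K : ℕ} (Y : Fin N → (Fin K → Bool) → ℝ) (ℓ : Finset (Fin K)) : ℝ :=
  (∑ i, (tauUnit Y i ℓ - tauFP Y ℓ) ^ 2) / ((N : ℝ) - 1)

/-- Sample variance `s_z²` of the observed outcomes in treatment group `z`. -/
noncomputable def s2obs {N : ℕ} {J : Type*} [DecidableEq J]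
    (Y : Fin N → J → ℝ) (Nj : J → ℕ) (j : J) (T : Fin N → J) : ℝ :=
  (∑ i ∈ Finset.univ.filter fun i => T i = j, (Y i j - pObs Y Nj j T) ^ 2) /
    ((Nj j : ℝ) - 1)


section CoreCRD
variable {N : ℕ} {J : Type*} [Fintype J] [DecidableEq J] {Nj : J → ℕ}

lemma mem_assignments {T : Fin N → J} :
    T ∈ assignments N Nj ↔ ∀ j, (Finset.univ.filter fun i => T i = j).card = Nj j := by
  simp [assignments]

lemma assignments_nonempty (hsum : ∑ j, Nj j = N) : (assignments N Nj).Nonempty := by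
  have hcard : Fintype.card (Σ j : J, Fin (Nj j)) = N := by
    simp [Fintype.card_sigma, hsum]
  obtain ⟨e⟩ : Nonempty ((Σ j : J, Fin (Nj j)) ≃ Fin N) :=
    ⟨Fintype.equivFinOfCardEq hcard⟩
  refine ⟨fun i => (e.symm i).1, ?_⟩
  rw [mem_assignments]
  intro j
  rw [Finset.card_filter]
  rw [Equiv.sum_comp e.symm (fun s => if s.1 = j then 1 else 0)]
  rw [← Finset.univ_sigma_univ, Finset.sum_sigma]
  simp [apply_ite Finset.card]

lemma comp_mem_assignments {T : Fin N → J} (hT : T ∈ assignments N Nj)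
    (σ : Equiv.Perm (Fin N)) : (T ∘ σ) ∈ assignments N Nj := by
  rw [mem_assignments] at hT ⊢
  intro j
  have : (Finset.univ.filter fun i => (T ∘ σ) i = j)
      = (Finset.univ.filter fun i => T i = j).map σ.symm.toEmbedding := by
    ext i
    simp [Finset.mem_map_equiv]
  rw [this, Finset.card_map, hT j]

lemma sum_assignments_comp (σ : Equiv.Perm (Fin N)) (f : (Fin N → J) → ℝ) :
    ∑ T ∈ assignments N Nj, f (T ∘ σ) = ∑ T ∈ assignments N Nj, f T := by
  apply Finset.sum_nbij' (fun T => T ∘ σ) (fun T => T ∘ σ.symm)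
  · intro T hT; exact comp_mem_assignments hT σ
  · intro T hT; exact comp_mem_assignments hT σ.symm
  · intro T hT; funext i; simp
  · intro T hT; funext i; simp
  · intro T hT; rfl

/-- indicator sums within one assignment -/
lemma sum_ind_eq (T : Fin N → J) (hT : T ∈ assignments N Nj) (z : J) :
    ∑ i : Fin N, (if T i = z then (1:ℝ) else 0) = Nj z := by
  rw [Finset.sum_boole]
  exact_mod_cast congrArg Nat.cast (mem_assignments.mp hT z)

/-- indicator count is independent of the unit -/
lemma sumT_ind_const (i i' : Fin N) (z : J) :
    ∑ T ∈ assignments N Nj, (if T i = z then (1:ℝ) else 0)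
      = ∑ T ∈ assignments N Nj, (if T i' = z then (1:ℝ) else 0) := by
  have := sum_assignments_comp (Nj := Nj) (Equiv.swap i i')
    (fun T => if T i = z then (1:ℝ) else 0)
  simpa [Equiv.swap_apply_left] using this.symm

lemma E1 (i : Fin N) (z : J) :
    (N : ℝ) * ∑ T ∈ assignments N Nj, (if T i = z then (1:ℝ) else 0)
      = (assignments N Nj).card * Nj z := by
  have key : (N:ℝ) * ∑ T ∈ assignments N Nj, (if T i = z then (1:ℝ) else 0)
      = ∑ i' : Fin N, ∑ T ∈ assignments N Nj, (if T i' = z then (1:ℝ) else 0) := by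
    rw [Finset.sum_congr rfl (fun i' _ => (sumT_ind_const i' i z))]
    simp [Finset.sum_const, mul_comm]
  rw [key, Finset.sum_comm]
  rw [Finset.sum_congr rfl (fun T hT => sum_ind_eq T hT z)]
  simp [mul_comm]

lemma sumT_ind2_const (i i' i'' : Fin N) (h' : i' ≠ i) (h'' : i'' ≠ i) (z z' : J) :
    ∑ T ∈ assignments N Nj, ((if T i = z then (1:ℝ) else 0) * (if T i' = z' then (1:ℝ) else 0))
      = ∑ T ∈ assignments N Nj,
        ((if T i = z then (1:ℝ) else 0) * (if T i'' = z' then (1:ℝ) else 0)) := by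
  have := sum_assignments_comp (Nj := Nj) (Equiv.swap i' i'')
    (fun T => (if T i = z then (1:ℝ) else 0) * (if T i' = z' then (1:ℝ) else 0))
  rw [← this]
  apply Finset.sum_congr rfl
  intro T _
  have h1 : (T ∘ Equiv.swap i' i'') i = T i := by
    simp [Equiv.swap_apply_of_ne_of_ne h'.symm h''.symm]
  have h2 : (T ∘ Equiv.swap i' i'') i' = T i'' := by simp
  rw [h1, h2]

lemma E2 {i i' : Fin N} (h : i ≠ i') (z z' : J) :
    (N : ℝ) * ((N:ℝ) - 1) * ∑ T ∈ assignments N Nj,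
        ((if T i = z then (1:ℝ) else 0) * (if T i' = z' then (1:ℝ) else 0))
      = (assignments N Nj).card * Nj z * ((Nj z' : ℝ) - if z = z' then 1 else 0) := by
  have key : ((N:ℝ) - 1) * ∑ T ∈ assignments N Nj,
        ((if T i = z then (1:ℝ) else 0) * (if T i' = z' then (1:ℝ) else 0))
      = ∑ i'' ∈ Finset.univ.erase i, ∑ T ∈ assignments N Nj,
        ((if T i = z then (1:ℝ) else 0) * (if T i'' = z' then (1:ℝ) else 0)) := by
    rw [Finset.sum_congr rfl (fun i'' hi'' =>
      (sumT_ind2_const i i'' i' (Finset.mem_erase.mp hi'').1 h.symm z z'))]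
    rw [Finset.sum_const, Finset.card_erase_of_mem (Finset.mem_univ i)]
    rw [nsmul_eq_mul]
    congr 1
    rw [Finset.card_univ, Fintype.card_fin, Nat.cast_sub i.pos]
    simp
  rw [mul_assoc, key, Finset.sum_comm]
  have inner : ∀ T ∈ assignments N Nj,
      ∑ i'' ∈ Finset.univ.erase i,
        ((if T i = z then (1:ℝ) else 0) * (if T i'' = z' then (1:ℝ) else 0))
      = (if T i = z then (1:ℝ) else 0) * ((Nj z' : ℝ) - if T i = z' then 1 else 0) := by
    intro T hT
    rw [← Finset.mul_sum]
    congr 1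
    rw [Finset.sum_erase_eq_sub (Finset.mem_univ i), sum_ind_eq T hT z']
  rw [Finset.sum_congr rfl inner]
  have point : ∀ T : Fin N → J,
      (if T i = z then (1:ℝ) else 0) * ((Nj z' : ℝ) - if T i = z' then 1 else 0)
      = (if T i = z then (1:ℝ) else 0) * ((Nj z' : ℝ) - if z = z' then 1 else 0) := by
    intro T
    by_cases hz : T i = z
    · subst hz; rfl
    · simp [hz]
  rw [Finset.sum_congr rfl (fun T _ => point T), ← Finset.sum_mul, ← mul_assoc, E1 i z]

end CoreCRD

section
variable {N : ℕ} {J : Type*} [Fintype J] [DecidableEq J] {Nj : J → ℕ}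

/-- linear statistic -/
noncomputable def Lst {N : ℕ} {J : Type*} [DecidableEq J]
    (w : Fin N → ℝ) (z : J) (T : Fin N → J) : ℝ :=
  ∑ i, if T i = z then w i else 0

lemma sumT_L (w : Fin N → ℝ) (z : J) :
    (N : ℝ) * ∑ T ∈ assignments N Nj, Lst w z T
      = (assignments N Nj).card * Nj z * ∑ i, w i := by
  have h1 : ∀ T, Lst w z T = ∑ i, (if T i = z then (1:ℝ) else 0) * w i := by
    intro T; rw [Lst]; apply Finset.sum_congr rfl; intro i _
    by_cases h : T i = z <;> simp [h]
  calc (N : ℝ) * ∑ T ∈ assignments N Nj, Lst w z T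
      = ∑ i, ((N:ℝ) * ∑ T ∈ assignments N Nj, (if T i = z then (1:ℝ) else 0)) * w i := by
        rw [Finset.sum_congr rfl (fun T _ => h1 T), Finset.sum_comm, Finset.mul_sum]
        apply Finset.sum_congr rfl; intro i _
        rw [← Finset.sum_mul, mul_assoc]
    _ = ∑ i, ((assignments N Nj).card * (Nj z : ℝ)) * w i := by
        apply Finset.sum_congr rfl; intro i _; rw [E1 i z]
    _ = (assignments N Nj).card * Nj z * ∑ i, w i := by rw [← Finset.mul_sum]

lemma pair_val (i i' : Fin N) (z z' : J) :
    (N : ℝ) * ((N:ℝ) - 1) * ∑ T ∈ assignments N Nj,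
        ((if T i = z then (1:ℝ) else 0) * (if T i' = z' then (1:ℝ) else 0))
      = (assignments N Nj).card *
        (if i = i' then (if z = z' then ((N:ℝ) - 1) * Nj z else 0)
          else (Nj z : ℝ) * ((Nj z' : ℝ) - if z = z' then 1 else 0)) := by
  by_cases h : i = i'
  · subst h
    by_cases hzz : z = z'
    · subst hzz
      have same : ∀ T : Fin N → J,
          ((if T i = z then (1:ℝ) else 0) * (if T i = z then (1:ℝ) else 0))
          = if T i = z then (1:ℝ) else 0 := by
        intro T; by_cases h1 : T i = z <;> simp [h1]
      rw [Finset.sum_congr rfl (fun T _ => same T), if_pos rfl, if_pos rfl]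
      linear_combination ((N:ℝ) - 1) * E1 (Nj := Nj) i z
    · have same : ∀ T : Fin N → J,
          ((if T i = z then (1:ℝ) else 0) * (if T i = z' then (1:ℝ) else 0)) = 0 := by
        intro T
        by_cases h1 : T i = z
        · rw [if_pos h1, one_mul, h1, if_neg hzz]
        · rw [if_neg h1, zero_mul]
      rw [Finset.sum_congr rfl (fun T _ => same T)]
      simp [hzz]
  · rw [if_neg h, E2 h z z', mul_assoc]

lemma sumT_LL (w v : Fin N → ℝ) (z z' : J) :
    (N : ℝ) * ((N:ℝ) - 1) * ∑ T ∈ assignments N Nj, Lst w z T * Lst v z' T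
      = (assignments N Nj).card *
        ((if z = z' then ((N:ℝ) - 1) * Nj z * ∑ i, w i * v i else 0)
          + (Nj z : ℝ) * ((Nj z' : ℝ) - if z = z' then 1 else 0)
            * ((∑ i, w i) * (∑ i, v i) - ∑ i, w i * v i)) := by
  set c : ℝ := ((assignments N Nj).card : ℝ) with hc
  set a : ℝ := if z = z' then ((N:ℝ) - 1) * Nj z else 0 with ha
  set b : ℝ := (Nj z : ℝ) * ((Nj z' : ℝ) - if z = z' then 1 else 0) with hb
  have step1 : ∀ T, Lst w z T * Lst v z' T
      = ∑ i, ∑ i', ((if T i = z then (1:ℝ) else 0) * (if T i' = z' then (1:ℝ) else 0))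
          * (w i * v i') := by
    intro T
    rw [Lst, Lst, Finset.sum_mul_sum]
    apply Finset.sum_congr rfl; intro i _
    apply Finset.sum_congr rfl; intro i' _
    by_cases h1 : T i = z <;> by_cases h2 : T i' = z' <;> simp [h1, h2]
  have swap : ∑ T ∈ assignments N Nj, Lst w z T * Lst v z' T
      = ∑ i : Fin N, ∑ i' : Fin N, (∑ T ∈ assignments N Nj,
          ((if T i = z then (1:ℝ) else 0) * (if T i' = z' then (1:ℝ) else 0))) * (w i * v i') := by
    rw [Finset.sum_congr rfl (fun T _ => step1 T), Finset.sum_comm]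
    apply Finset.sum_congr rfl; intro i _
    rw [Finset.sum_comm]
    apply Finset.sum_congr rfl; intro i' _
    rw [← Finset.sum_mul]
  have main : (N : ℝ) * ((N:ℝ) - 1) * ∑ T ∈ assignments N Nj, Lst w z T * Lst v z' T
      = ∑ i : Fin N, ∑ i' : Fin N, (c * (if i = i' then a else b)) * (w i * v i') := by
    rw [swap, Finset.mul_sum]
    apply Finset.sum_congr rfl; intro i _
    rw [Finset.mul_sum]
    apply Finset.sum_congr rfl; intro i' _
    rw [← mul_assoc, pair_val i i' z z']
  rw [main]
  have expand : ∀ i i' : Fin N, (c * (if i = i' then a else b)) * (w i * v i')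
      = c * b * (w i * v i') + (if i' = i then c * (a - b) * (w i * v i') else 0) := by
    intro i i'
    by_cases h : i = i' <;> simp [h, eq_comm] <;> ring
  have row : ∀ i : Fin N, ∑ i' : Fin N, (c * (if i = i' then a else b)) * (w i * v i')
      = c * b * (w i * (∑ i' : Fin N, v i')) + c * (a - b) * (w i * v i) := by
    intro i
    rw [Finset.sum_congr rfl (fun i' _ => expand i i'), Finset.sum_add_distrib]
    congr 1
    · have h0 : ∀ i' : Fin N, c * b * (w i * v i') = (c * b * w i) * v i' :=
        fun i' => by ring
      rw [Finset.sum_congr rfl (fun i' _ => h0 i'), ← Finset.mul_sum]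
      ring
    · rw [Finset.sum_ite_eq' univ i (fun i' => c * (a - b) * (w i * v i'))]
      simp
  rw [Finset.sum_congr rfl (fun i _ => row i), Finset.sum_add_distrib]
  have h1 : ∑ i : Fin N, c * b * (w i * (∑ i' : Fin N, v i'))
      = c * b * ((∑ i, w i) * (∑ i, v i)) := by
    have h0 : ∀ i : Fin N, c * b * (w i * (∑ i' : Fin N, v i'))
        = (c * b * (∑ i' : Fin N, v i')) * w i := fun i => by ring
    rw [Finset.sum_congr rfl (fun i _ => h0 i), ← Finset.mul_sum]
    ring
  have h2 : ∑ i : Fin N, c * (a - b) * (w i * v i) = c * (a - b) * ∑ i, w i * v i := by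
    rw [← Finset.mul_sum]
  have key : (if z = z' then ((N:ℝ) - 1) * Nj z * ∑ i, w i * v i else 0)
      = a * ∑ i, w i * v i := by
    by_cases hzz : z = z' <;> simp [ha, hzz]
  rw [h1, h2, key]
  ring
end

section MidCRD
variable {N : ℕ} {J : Type*} [Fintype J] [DecidableEq J] {Nj : J → ℕ}

-- new material
lemma card_A_ne_zero (hsum : ∑ j, Nj j = N) : ((assignments N Nj).card : ℝ) ≠ 0 := by
  have h := assignments_nonempty (Nj := Nj) hsum
  exact_mod_cast (Nat.cast_pos.mpr (Finset.card_pos.mpr h)).ne'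

lemma sumT_L_div (hN : (N:ℝ) ≠ 0) (w : Fin N → ℝ) (z : J) :
    ∑ T ∈ assignments N Nj, Lst w z T
      = ((assignments N Nj).card : ℝ) * ((Nj z : ℝ) * (∑ i, w i)) / N := by
  rw [eq_div_iff hN]
  linear_combination sumT_L (Nj := Nj) w z

lemma sumT_LL_div (hN : (N:ℝ) ≠ 0) (hN1 : (N:ℝ) - 1 ≠ 0) (w v : Fin N → ℝ) (z z' : J) :
    ∑ T ∈ assignments N Nj, Lst w z T * Lst v z' T
      = ((assignments N Nj).card : ℝ) *
        (((if z = z' then ((N:ℝ) - 1) * Nj z * ∑ i, w i * v i else 0)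
          + (Nj z : ℝ) * ((Nj z' : ℝ) - if z = z' then 1 else 0)
            * ((∑ i, w i) * (∑ i, v i) - ∑ i, w i * v i)) / ((N:ℝ) * ((N:ℝ) - 1))) := by
  rw [mul_div_assoc', eq_div_iff (mul_ne_zero hN hN1)]
  linear_combination sumT_LL (Nj := Nj) w v z z'

lemma expect_def (f : (Fin N → J) → ℝ) :
    expect Nj f = (∑ T ∈ assignments N Nj, f T) / ((assignments N Nj).card : ℝ) := rfl

lemma rvar_expand (hsum : ∑ j, Nj j = N) (f : (Fin N → J) → ℝ) :
    rvar Nj f = expect Nj (fun T => f T ^ 2) - (expect Nj f) ^ 2 := by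
  have hc := card_A_ne_zero (Nj := Nj) hsum
  rw [rvar, expect_def f, expect_def, expect_def (fun T => f T ^ 2)]
  have e : ∀ T : Fin N → J,
      (f T - (∑ T ∈ assignments N Nj, f T) / ((assignments N Nj).card : ℝ)) ^ 2
      = f T ^ 2 - (2 * ((∑ T ∈ assignments N Nj, f T) / ((assignments N Nj).card : ℝ))) * f T
        + ((∑ T ∈ assignments N Nj, f T) / ((assignments N Nj).card : ℝ)) ^ 2 := by
    intro T; ring
  rw [Finset.sum_congr rfl (fun T _ => e T), Finset.sum_add_distrib, Finset.sum_sub_distrib,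
    ← Finset.mul_sum, Finset.sum_const, nsmul_eq_mul]
  field_simp
  ring

lemma smul_sum_swap {ι κ : Type*} (s : Finset ι) (t : Finset κ) (g : κ → ℝ)
    (f : κ → ι → ℝ) :
    ∑ x ∈ s, ∑ y ∈ t, g y * f y x = ∑ y ∈ t, g y * ∑ x ∈ s, f y x := by
  rw [Finset.sum_comm]
  exact Finset.sum_congr rfl fun y _ => (Finset.mul_sum _ _ _).symm

lemma smul_sum_swap2 {ι κ γ : Type*} (s : Finset ι) (t : Finset κ) (u : Finset γ)
    (g : κ → γ → ℝ) (f : κ → γ → ι → ℝ) :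
    ∑ x ∈ s, ∑ y ∈ t, ∑ w ∈ u, g y w * f y w x
      = ∑ y ∈ t, ∑ w ∈ u, g y w * ∑ x ∈ s, f y w x := by
  rw [Finset.sum_comm]
  exact Finset.sum_congr rfl fun y _ => smul_sum_swap s u (g y) (f y)

end MidCRD

lemma centered_sum {N : ℕ} (hN : (N:ℝ) ≠ 0) (x y : Fin N → ℝ) :
    ∑ i, (x i - (∑ j, x j) / (N:ℝ)) * (y i - (∑ j, y j) / (N:ℝ))
      = ∑ i, x i * y i - (∑ i, x i) * (∑ i, y i) / (N:ℝ) := by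
  have e : ∀ i : Fin N,
      (x i - (∑ j, x j) / (N:ℝ)) * (y i - (∑ j, y j) / (N:ℝ))
      = x i * y i - ((∑ j, x j) / (N:ℝ)) * y i - ((∑ j, y j) / (N:ℝ)) * x i
        + ((∑ j, x j) / (N:ℝ)) * ((∑ j, y j) / (N:ℝ)) := fun i => by ring
  rw [Finset.sum_congr rfl (fun i _ => e i), Finset.sum_add_distrib,
    Finset.sum_sub_distrib, Finset.sum_sub_distrib, ← Finset.mul_sum, ← Finset.mul_sum,
    Finset.sum_const, nsmul_eq_mul, Finset.card_univ, Fintype.card_fin]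
  field_simp
  ring

lemma lam_mul_self {K : ℕ} (ℓ : Finset (Fin K)) : ∀ z, lam ℓ z * lam ℓ z = 1 := by
  intro z
  rw [lam, ← Finset.prod_mul_distrib]
  refine Finset.prod_eq_one fun k _ => ?_
  by_cases h : z k <;> simp [h]

lemma diag_inject {J : Type*} [Fintype J] [DecidableEq J] (f : J → ℝ) (lamf : J → ℝ)
    (hl : ∀ z, lamf z * lamf z = 1) :
    ∑ z, f z = ∑ z, ∑ z', if z' = z then (lamf z * lamf z') * f z else 0 := by
  refine Finset.sum_congr rfl fun z _ => ?_
  rw [Finset.sum_ite_eq' Finset.univ z (fun z' => (lamf z * lamf z') * f z)]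
  simp [hl z]


lemma diag_scalar (n nz m M c : ℝ) (hn : n ≠ 0) (hn1 : n - 1 ≠ 0) (hz : nz ≠ 0)
    (hz1 : nz - 1 ≠ 0) :
    c ^ 2 / ((nz - 1) * nz) * (nz * M / n)
      + -(c ^ 2) / (nz * nz * (nz - 1))
          * (((n - 1) * nz * M + nz * (nz - 1) * (m * m - M)) / (n * (n - 1)))
      - ((c / nz) * (c / nz)
            * (((n - 1) * nz * M + nz * (nz - 1) * (m * m - M)) / (n * (n - 1)))
          - (c * m / n) * (c * m / n))
      = c * c * (M - m * m / n) / ((n - 1) * n) := by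
  field_simp
  ring

lemma offdiag_scalar (n nz nz' mz mz' M c : ℝ) (hn : n ≠ 0) (hn1 : n - 1 ≠ 0)
    (hz : nz ≠ 0) (hz' : nz' ≠ 0) :
    0 + 0 - ((c / nz) * (c / nz') * ((0 + nz * (nz' - 0) * (mz * mz' - M)) / (n * (n - 1)))
      - (c * mz / n) * (c * mz' / n))
      = c * c * (M - mz * mz' / n) / ((n - 1) * n) := by
  field_simp
  ring

lemma sum2_combine {J : Type*} [Fintype J] (A B C D E : J → J → ℝ)
    (h : ∀ z z', A z z' + B z z' - (C z z' - D z z') = E z z') :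
    ((∑ z, ∑ z', A z z') + ∑ z, ∑ z', B z z') - ((∑ z, ∑ z', C z z') - ∑ z, ∑ z', D z z')
      = ∑ z, ∑ z', E z z' := by
  simp only [← Finset.sum_add_distrib, ← Finset.sum_sub_distrib]
  exact Finset.sum_congr rfl fun z _ => Finset.sum_congr rfl fun z' _ => h z z'

/-- Conservativeness of the Neymanian variance estimator
`V̂_ℓ = 2^{-2(K-1)} Σ_z s_z²/N_z`: for every nonempty subset `ℓ`,
`E[V̂_ℓ] - Var(τ̂_ℓ) = S²_{τ_ℓ}/N ≥ 0`, with equality to zero iff the unit-level effects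
`τ_{i,ℓ}` are equal for all units. -/
theorem neymanian_variance_conservative {N K : ℕ} (hN : 2 ≤ N)
    (Y : Fin N → (Fin K → Bool) → ℝ) (Nj : (Fin K → Bool) → ℕ)
    (h2 : ∀ z, 2 ≤ Nj z) (hsum : ∑ z, Nj z = N)
    (ℓ : Finset (Fin K)) (hℓ : ℓ.Nonempty) :
    expect Nj (fun T => (1 / 2 ^ (2 * (K - 1))) * ∑ z, s2obs Y Nj z T / (Nj z : ℝ))
        - rvar Nj (tauHat Y Nj ℓ) = S2tau Y ℓ / (N : ℝ) ∧
      0 ≤ S2tau Y ℓ / (N : ℝ) ∧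
      (S2tau Y ℓ / (N : ℝ) = 0 ↔ ∀ i i' : Fin N, tauUnit Y i ℓ = tauUnit Y i' ℓ) := by
  classical
  have hcc : ((assignments N Nj).card : ℝ) ≠ 0 := card_A_ne_zero hsum
  have hN2 : (2:ℝ) ≤ (N:ℝ) := by exact_mod_cast hN
  have hNne : (N:ℝ) ≠ 0 := by linarith
  have hN1ne : (N:ℝ) - 1 ≠ 0 := by linarith
  have hz2 : ∀ z : Fin K → Bool, (2:ℝ) ≤ (Nj z : ℝ) := fun z => by exact_mod_cast h2 z
  have hzne : ∀ z : Fin K → Bool, (Nj z : ℝ) ≠ 0 := fun z => by linarith [hz2 z]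
  have hz1ne : ∀ z : Fin K → Bool, (Nj z : ℝ) - 1 ≠ 0 := fun z => by linarith [hz2 z]
  -- pointwise identities
  have hpObs : ∀ (z : Fin K → Bool) (T : Fin N → (Fin K → Bool)),
      pObs Y Nj z T = Lst (fun i => Y i z) z T / (Nj z : ℝ) := by
    intro z T
    rw [pObs, Lst, Finset.sum_filter]
  have hs2 : ∀ (z : Fin K → Bool) (T : Fin N → (Fin K → Bool)), T ∈ assignments N Nj →
      s2obs Y Nj z T
        = (Lst (fun i => Y i z * Y i z) z T - Lst (fun i => Y i z) z T * Lst (fun i => Y i z) z T / (Nj z : ℝ)) / ((Nj z : ℝ) - 1) := by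
    intro z T hT
    rw [s2obs]
    congr 1
    have hcard : ((Finset.univ.filter fun i => T i = z).card : ℝ) = (Nj z : ℝ) := by
      exact_mod_cast congrArg Nat.cast (mem_assignments.mp hT z)
    have e : ∀ i : Fin N, (Y i z - pObs Y Nj z T) ^ 2
        = Y i z * Y i z - (2 * pObs Y Nj z T) * Y i z + pObs Y Nj z T ^ 2 :=
      fun i => by ring
    rw [Finset.sum_congr rfl (fun i _ => e i), Finset.sum_add_distrib,
      Finset.sum_sub_distrib, ← Finset.mul_sum, Finset.sum_const, nsmul_eq_mul, hcard]
    have hQ : ∑ i ∈ Finset.univ.filter (fun i => T i = z), Y i z * Y i z = Lst (fun i => Y i z * Y i z) z T := by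
      rw [Lst, Finset.sum_filter]
    have hL : ∑ i ∈ Finset.univ.filter (fun i => T i = z), Y i z = Lst (fun i => Y i z) z T := by
      rw [Lst, Finset.sum_filter]
    rw [hQ, hL, hpObs z T]
    field_simp [hzne z]
    ring
  have hTau : ∀ T : Fin N → (Fin K → Bool), tauHat Y Nj ℓ T
      = ∑ z, ((1 / 2 ^ (K - 1) : ℝ) * lam ℓ z / (Nj z : ℝ)) * Lst (fun i => Y i z) z T := by
    intro T
    rw [tauHat, Finset.mul_sum]
    refine Finset.sum_congr rfl fun z _ => ?_
    rw [hpObs z T]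
    ring
  -- expectation of tauHat
  have hE1 : expect Nj (tauHat Y Nj ℓ) = ∑ z, (1 / 2 ^ (K - 1) : ℝ) * lam ℓ z * (∑ i, Y i z) / (N:ℝ) := by
    rw [expect_def, Finset.sum_congr rfl (fun T _ => hTau T), smul_sum_swap]
    have s1 : ∀ z : Fin K → Bool,
        ((1 / 2 ^ (K - 1) : ℝ) * lam ℓ z / (Nj z : ℝ)) * (∑ T ∈ assignments N Nj, Lst (fun i => Y i z) z T)
        = ((assignments N Nj).card : ℝ) * ((1 / 2 ^ (K - 1) : ℝ) * lam ℓ z * (∑ i, Y i z) / (N:ℝ)) := by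
      intro z
      rw [sumT_L_div hNne]
      generalize (1 / 2 ^ (K - 1) : ℝ) = t
      field_simp [hzne z, hNne]
    rw [Finset.sum_congr rfl (fun z _ => s1 z), ← Finset.mul_sum]
    exact mul_div_cancel_left₀ _ hcc
  -- expectation of tauHat squared
  have hE2 : expect Nj (fun T => tauHat Y Nj ℓ T ^ 2)
      = ∑ z, ∑ z', (((1 / 2 ^ (K - 1) : ℝ) * lam ℓ z / (Nj z : ℝ)) * ((1 / 2 ^ (K - 1) : ℝ) * lam ℓ z' / (Nj z' : ℝ))) * (((if z = z' then ((N:ℝ) - 1) * (Nj z : ℝ) * ∑ i, Y i z * Y i z' else 0) + (Nj z : ℝ) * ((Nj z' : ℝ) - if z = z' then 1 else 0) * ((∑ i, Y i z) * (∑ i, Y i z') - ∑ i, Y i z * Y i z')) / ((N:ℝ) * ((N:ℝ) - 1))) := by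
    have hTau2 : ∀ T : Fin N → (Fin K → Bool), tauHat Y Nj ℓ T ^ 2
        = ∑ z, ∑ z', (((1 / 2 ^ (K - 1) : ℝ) * lam ℓ z / (Nj z : ℝ)) * ((1 / 2 ^ (K - 1) : ℝ) * lam ℓ z' / (Nj z' : ℝ)))
            * (Lst (fun i => Y i z) z T * Lst (fun i => Y i z') z' T) := by
      intro T
      rw [hTau T, pow_two, Finset.sum_mul_sum]
      exact Finset.sum_congr rfl fun z _ => Finset.sum_congr rfl fun z' _ => by ring
    rw [expect_def, Finset.sum_congr rfl (fun T _ => hTau2 T), smul_sum_swap2]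
    have s2 : ∀ z z' : Fin K → Bool,
        (((1 / 2 ^ (K - 1) : ℝ) * lam ℓ z / (Nj z : ℝ)) * ((1 / 2 ^ (K - 1) : ℝ) * lam ℓ z' / (Nj z' : ℝ)))
          * (∑ T ∈ assignments N Nj, Lst (fun i => Y i z) z T * Lst (fun i => Y i z') z' T)
        = ((assignments N Nj).card : ℝ) * ((((1 / 2 ^ (K - 1) : ℝ) * lam ℓ z / (Nj z : ℝ)) * ((1 / 2 ^ (K - 1) : ℝ) * lam ℓ z' / (Nj z' : ℝ))) * (((if z = z' then ((N:ℝ) - 1) * (Nj z : ℝ) * ∑ i, Y i z * Y i z' else 0) + (Nj z : ℝ) * ((Nj z' : ℝ) - if z = z' then 1 else 0) * ((∑ i, Y i z) * (∑ i, Y i z') - ∑ i, Y i z * Y i z')) / ((N:ℝ) * ((N:ℝ) - 1)))) := by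
      intro z z'
      rw [sumT_LL_div hNne hN1ne]
      ring
    rw [Finset.sum_congr rfl (fun z _ => Finset.sum_congr rfl (fun z' _ => s2 z z'))]
    rw [Finset.sum_congr rfl (fun z (_ : z ∈ univ) => (Finset.mul_sum _ _ _).symm),
      ← Finset.mul_sum]
    exact mul_div_cancel_left₀ _ hcc
  -- expectation of the variance estimator
  have hcJ : (1 / 2 ^ (2 * (K - 1)) : ℝ) = (1 / 2 ^ (K - 1) : ℝ) ^ 2 := by
    rw [div_pow, one_pow, ← pow_mul, Nat.mul_comm]
  have hE3 : expect Nj (fun T => (1 / 2 ^ (2 * (K - 1))) * ∑ z, s2obs Y Nj z T / (Nj z : ℝ))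
      = (∑ z, ((1 / 2 ^ (K - 1) : ℝ) ^ 2 / (((Nj z : ℝ) - 1) * (Nj z : ℝ))) * ((Nj z : ℝ) * (∑ i, Y i z * Y i z) / (N:ℝ))) + ∑ z, (-((1 / 2 ^ (K - 1) : ℝ) ^ 2) / ((Nj z : ℝ) * (Nj z : ℝ) * ((Nj z : ℝ) - 1))) * (((if z = z then ((N:ℝ) - 1) * (Nj z : ℝ) * ∑ i, Y i z * Y i z else 0) + (Nj z : ℝ) * ((Nj z : ℝ) - if z = z then 1 else 0) * ((∑ i, Y i z) * (∑ i, Y i z) - ∑ i, Y i z * Y i z)) / ((N:ℝ) * ((N:ℝ) - 1))) := by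
    have hVpt : ∀ T ∈ assignments N Nj,
        (1 / 2 ^ (2 * (K - 1)) : ℝ) * ∑ z, s2obs Y Nj z T / (Nj z : ℝ)
        = (∑ z, ((1 / 2 ^ (K - 1) : ℝ) ^ 2 / (((Nj z : ℝ) - 1) * (Nj z : ℝ))) * Lst (fun i => Y i z * Y i z) z T)
          + ∑ z, (-((1 / 2 ^ (K - 1) : ℝ) ^ 2) / ((Nj z : ℝ) * (Nj z : ℝ) * ((Nj z : ℝ) - 1))) * (Lst (fun i => Y i z) z T * Lst (fun i => Y i z) z T) := by
      intro T hT
      rw [Finset.mul_sum, ← Finset.sum_add_distrib]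
      refine Finset.sum_congr rfl fun z _ => ?_
      rw [hs2 z T hT, hcJ]
      generalize (1 / 2 ^ (K - 1) : ℝ) = t
      field_simp [hzne z, hz1ne z]
      ring
    rw [expect_def, Finset.sum_congr rfl hVpt, Finset.sum_add_distrib,
      smul_sum_swap, smul_sum_swap]
    have s3 : ∀ z : Fin K → Bool,
        ((1 / 2 ^ (K - 1) : ℝ) ^ 2 / (((Nj z : ℝ) - 1) * (Nj z : ℝ))) * (∑ T ∈ assignments N Nj, Lst (fun i => Y i z * Y i z) z T)
        = ((assignments N Nj).card : ℝ) * (((1 / 2 ^ (K - 1) : ℝ) ^ 2 / (((Nj z : ℝ) - 1) * (Nj z : ℝ))) * ((Nj z : ℝ) * (∑ i, Y i z * Y i z) / (N:ℝ))) := by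
      intro z
      rw [sumT_L_div hNne]
      ring
    have s4 : ∀ z : Fin K → Bool,
        (-((1 / 2 ^ (K - 1) : ℝ) ^ 2) / ((Nj z : ℝ) * (Nj z : ℝ) * ((Nj z : ℝ) - 1))) * (∑ T ∈ assignments N Nj, Lst (fun i => Y i z) z T * Lst (fun i => Y i z) z T)
        = ((assignments N Nj).card : ℝ) * ((-((1 / 2 ^ (K - 1) : ℝ) ^ 2) / ((Nj z : ℝ) * (Nj z : ℝ) * ((Nj z : ℝ) - 1))) * (((if z = z then ((N:ℝ) - 1) * (Nj z : ℝ) * ∑ i, Y i z * Y i z else 0) + (Nj z : ℝ) * ((Nj z : ℝ) - if z = z then 1 else 0) * ((∑ i, Y i z) * (∑ i, Y i z) - ∑ i, Y i z * Y i z)) / ((N:ℝ) * ((N:ℝ) - 1)))) := by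
      intro z
      rw [sumT_LL_div hNne hN1ne]
      ring
    rw [Finset.sum_congr rfl (fun z _ => s3 z), Finset.sum_congr rfl (fun z _ => s4 z),
      ← Finset.mul_sum, ← Finset.mul_sum, ← mul_add]
    exact mul_div_cancel_left₀ _ hcc
  -- closed form of S2tau
  have hS2 : S2tau Y ℓ
      = (∑ z, ∑ z', ((1 / 2 ^ (K - 1) : ℝ) * lam ℓ z) * ((1 / 2 ^ (K - 1) : ℝ) * lam ℓ z') * ((∑ i, Y i z * Y i z') - (∑ i, Y i z) * (∑ i, Y i z') / (N:ℝ))) / ((N:ℝ) - 1) := by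
    have hcent : ∀ i : Fin N, tauUnit Y i ℓ - tauFP Y ℓ
        = ∑ z, ((1 / 2 ^ (K - 1) : ℝ) * lam ℓ z) * (Y i z - (∑ i', Y i' z) / (N:ℝ)) := by
      intro i
      rw [tauUnit, tauFP, ← mul_sub, ← Finset.sum_sub_distrib, Finset.mul_sum]
      refine Finset.sum_congr rfl fun z _ => ?_
      rw [Pmean]
      ring
    have hsq : ∀ i : Fin N, (tauUnit Y i ℓ - tauFP Y ℓ) ^ 2
        = ∑ z, ∑ z', (((1 / 2 ^ (K - 1) : ℝ) * lam ℓ z) * ((1 / 2 ^ (K - 1) : ℝ) * lam ℓ z'))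
            * ((Y i z - (∑ i', Y i' z) / (N:ℝ)) * (Y i z' - (∑ i', Y i' z') / (N:ℝ))) := by
      intro i
      rw [hcent i, pow_two, Finset.sum_mul_sum]
      exact Finset.sum_congr rfl fun z _ => Finset.sum_congr rfl fun z' _ => by ring
    rw [S2tau, Finset.sum_congr rfl (fun i _ => hsq i), smul_sum_swap2]
    congr 1
    refine Finset.sum_congr rfl fun z _ => Finset.sum_congr rfl fun z' _ => ?_
    rw [centered_sum hNne]
  -- the master algebraic identity
  have hpair : ∀ z z' : Fin K → Bool,
      (if z' = z then (lam ℓ z * lam ℓ z') * (((1 / 2 ^ (K - 1) : ℝ) ^ 2 / (((Nj z : ℝ) - 1) * (Nj z : ℝ))) * ((Nj z : ℝ) * (∑ i, Y i z * Y i z) / (N:ℝ))) else 0)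
        + (if z' = z then (lam ℓ z * lam ℓ z') * ((-((1 / 2 ^ (K - 1) : ℝ) ^ 2) / ((Nj z : ℝ) * (Nj z : ℝ) * ((Nj z : ℝ) - 1))) * (((if z = z then ((N:ℝ) - 1) * (Nj z : ℝ) * ∑ i, Y i z * Y i z else 0) + (Nj z : ℝ) * ((Nj z : ℝ) - if z = z then 1 else 0) * ((∑ i, Y i z) * (∑ i, Y i z) - ∑ i, Y i z * Y i z)) / ((N:ℝ) * ((N:ℝ) - 1)))) else 0)
        - ((((1 / 2 ^ (K - 1) : ℝ) * lam ℓ z / (Nj z : ℝ)) * ((1 / 2 ^ (K - 1) : ℝ) * lam ℓ z' / (Nj z' : ℝ))) * (((if z = z' then ((N:ℝ) - 1) * (Nj z : ℝ) * ∑ i, Y i z * Y i z' else 0) + (Nj z : ℝ) * ((Nj z' : ℝ) - if z = z' then 1 else 0) * ((∑ i, Y i z) * (∑ i, Y i z') - ∑ i, Y i z * Y i z')) / ((N:ℝ) * ((N:ℝ) - 1))) - ((1 / 2 ^ (K - 1) : ℝ) * lam ℓ z * (∑ i, Y i z) / (N:ℝ)) * ((1 / 2 ^ (K - 1) : ℝ)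 * lam ℓ z' * (∑ i, Y i z') / (N:ℝ)))
      = (((1 / 2 ^ (K - 1) : ℝ) * lam ℓ z) * ((1 / 2 ^ (K - 1) : ℝ) * lam ℓ z') * ((∑ i, Y i z * Y i z') - (∑ i, Y i z) * (∑ i, Y i z') / (N:ℝ))) / (((N:ℝ) - 1) * (N:ℝ)) := by
    intro z z'
    by_cases hd : z' = z
    · subst hd
      simp only [eq_self_iff_true, if_true, ite_true]
      linear_combination (lam ℓ z' * lam ℓ z') *
        diag_scalar (N:ℝ) (Nj z' : ℝ) (∑ i, Y i z') (∑ i, Y i z' * Y i z') (1 / 2 ^ (K - 1) : ℝ)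
          hNne hN1ne (hzne z') (hz1ne z')
    · have hd2 : ¬ (z = z') := fun hh => hd hh.symm
      simp only [if_neg hd, if_neg hd2]
      linear_combination (lam ℓ z * lam ℓ z') *
        offdiag_scalar (N:ℝ) (Nj z : ℝ) (Nj z' : ℝ) (∑ i, Y i z) (∑ i, Y i z')
          (∑ i, Y i z * Y i z') (1 / 2 ^ (K - 1) : ℝ) hNne hN1ne (hzne z) (hzne z')
  have EQ : ((∑ z, ((1 / 2 ^ (K - 1) : ℝ) ^ 2 / (((Nj z : ℝ) - 1) * (Nj z : ℝ))) * ((Nj z : ℝ) * (∑ i, Y i z * Y i z) / (N:ℝ))) + ∑ z, (-((1 / 2 ^ (K - 1) : ℝ) ^ 2) / ((Nj z : ℝ) * (Nj z : ℝ) * ((Nj z : ℝ) - 1))) * (((if z = z then ((N:ℝ) - 1) * (Nj z : ℝ) * ∑ i, Y i z * Y i z else 0) + (Nj z : ℝ) * ((Nj z : ℝ) - if z = z then 1 else 0) * ((∑ i, Y i z) * (∑ i, Y i z) - ∑ i, Y i z * Y i z)) / ((N:ℝ) * ((N:ℝ) - 1))))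
        - ((∑ z, ∑ z', (((1 / 2 ^ (K - 1) : ℝ) * lam ℓ z / (Nj z : ℝ)) * ((1 / 2 ^ (K - 1) : ℝ) * lam ℓ z' / (Nj z' : ℝ))) * (((if z = z' then ((N:ℝ) - 1) * (Nj z : ℝ) * ∑ i, Y i z * Y i z' else 0) + (Nj z : ℝ) * ((Nj z' : ℝ) - if z = z' then 1 else 0) * ((∑ i, Y i z) * (∑ i, Y i z') - ∑ i, Y i z * Y i z')) / ((N:ℝ) * ((N:ℝ) - 1)))) - (∑ z, (1 / 2 ^ (K - 1) : ℝ) * lam ℓ z * (∑ i, Y i z) / (N:ℝ)) ^ 2)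
      = ((∑ z, ∑ z', ((1 / 2 ^ (K - 1) : ℝ) * lam ℓ z) * ((1 / 2 ^ (K - 1) : ℝ) * lam ℓ z') * ((∑ i, Y i z * Y i z') - (∑ i, Y i z) * (∑ i, Y i z') / (N:ℝ))) / ((N:ℝ) - 1)) / (N:ℝ) := by
    rw [diag_inject (fun z => ((1 / 2 ^ (K - 1) : ℝ) ^ 2 / (((Nj z : ℝ) - 1) * (Nj z : ℝ))) * ((Nj z : ℝ) * (∑ i, Y i z * Y i z) / (N:ℝ))) (lam ℓ) (lam_mul_self ℓ),
      diag_inject (fun z => (-((1 / 2 ^ (K - 1) : ℝ) ^ 2) / ((Nj z : ℝ) * (Nj z : ℝ) * ((Nj z : ℝ) - 1))) * (((if z = z then ((N:ℝ) - 1) * (Nj z : ℝ) * ∑ i, Y i z * Y i z else 0) + (Nj z : ℝ) * ((Nj z : ℝ) - if z = z then 1 else 0) * ((∑ i, Y i z) * (∑ i, Y i z) - ∑ i, Y i z * Y i z)) / ((N:ℝ) * ((N:ℝ) - 1)))) (lam ℓ) (lam_mul_self ℓ), div_div]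
    rw [show ∀ (F : (Fin K → Bool) → ℝ), (∑ z, F z)^2 = ∑ z, ∑ z', F z * F z' from
      fun F => by rw [pow_two, Finset.sum_mul_sum]]

    simp only [Finset.sum_div]
    refine sum2_combine _ _ _ _ _ fun z z' => ?_
    have h := hpair z z'
    simp only [eq_self_iff_true, if_true, ite_true] at h ⊢
    exact h
  refine ⟨?_, ?_, ?_⟩
  · rw [rvar_expand hsum, hE1, hE2, hE3, hS2]
    exact EQ
  · have h0 : 0 ≤ S2tau Y ℓ := by
      rw [S2tau]
      exact div_nonneg (Finset.sum_nonneg fun i _ => sq_nonneg _) (by linarith)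
    exact div_nonneg h0 (by linarith)
  · constructor
    · intro h
      have hz0 : S2tau Y ℓ = 0 := by
        rcases div_eq_zero_iff.mp h with h' | h'
        · exact h'
        · exact absurd h' hNne
      rw [S2tau] at hz0
      rcases div_eq_zero_iff.mp hz0 with h' | h'
      · have heach := (Finset.sum_eq_zero_iff_of_nonneg
          (fun i (_ : i ∈ Finset.univ) => sq_nonneg (tauUnit Y i ℓ - tauFP Y ℓ))).mp h'
        intro i i'
        have e1 : tauUnit Y i ℓ = tauFP Y ℓ :=
          sub_eq_zero.mp (pow_eq_zero_iff two_ne_zero |>.mp (heach i (Finset.mem_univ i)))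
        have e2 : tauUnit Y i' ℓ = tauFP Y ℓ :=
          sub_eq_zero.mp (pow_eq_zero_iff two_ne_zero |>.mp (heach i' (Finset.mem_univ i')))
        rw [e1, e2]
      · exact absurd h' hN1ne
    · intro hall
      have havg : (N:ℝ) * tauFP Y ℓ = ∑ i, tauUnit Y i ℓ := by
        have hTU : ∀ i : Fin N, tauUnit Y i ℓ = ∑ z, ((1 / 2 ^ (K - 1) : ℝ) * lam ℓ z) * Y i z := by
          intro i
          rw [tauUnit, Finset.mul_sum]
          exact Finset.sum_congr rfl fun z _ => by ring
        rw [Finset.sum_congr rfl (fun i _ => hTU i), smul_sum_swap, tauFP, Finset.mul_sum,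
          Finset.mul_sum]
        refine Finset.sum_congr rfl fun z _ => ?_
        rw [Pmean]
        generalize (1 / 2 ^ (K - 1) : ℝ) = t
        field_simp
      have hconst : ∀ i : Fin N, tauUnit Y i ℓ = tauFP Y ℓ := by
        intro i
        have hsum' : ∑ i' : Fin N, tauUnit Y i' ℓ = (N:ℝ) * tauUnit Y i ℓ := by
          rw [Finset.sum_congr rfl (fun i' _ => hall i' i), Finset.sum_const,
            nsmul_eq_mul, Finset.card_univ, Fintype.card_fin]
        have hx : (N:ℝ) * tauFP Y ℓ = (N:ℝ) * tauUnit Y i ℓ := by rw [havg, hsum']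
        exact (mul_left_cancel₀ hNne hx).symm
      have hz0 : S2tau Y ℓ = 0 := by
        rw [S2tau, Finset.sum_eq_zero (fun i _ => by rw [hconst i]; simp), zero_div]
      rw [hz0, zero_div]
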